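/- The generating function of hook Schur functions satisfies 1 + (u+v) ∑_{p,q≥0} s_{(p|q)} u^p v^q = H(u)/H(−v), where H(z) = ∑_{n≥0} h_n z^n is the generating series of complete homogeneous symmetric functions and s_{(p|q)} is the Schur function of the hook partition with arm p and leg q (Frobenius coordinates (p|q)). -/

import Mathlib

open Matrix

/-- `h` extended to integer indices by `0` for negative indices. -/
def hInt {R : Type*} [CommRing R] (h : ℕ → R) : ℤ → R :=
  fun k => if 0 ≤ k then h k.toNat else 0

/-- The hook Schur function `s_{(p|q)}`, i.e. the Schur function of the
partition `(p+1, 1^q)`, defined via the Jacobi–Trudi determinant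
`det [h_{λ_i - i + j}]` (indices `i, j` here are 0-based). -/
def hookSchur {R : Type*} [CommRing R] (h : ℕ → R) (p q : ℕ) : R :=
  (Matrix.of fun i j : Fin (q + 1) =>
    hInt h ((if (i : ℕ) = 0 then (p : ℤ) + 1 else 1) - (i : ℕ) + (j : ℕ))).det

section WidomAux

variable {R : Type*} [CommRing R]

lemma hInt_nat (h : ℕ → R) (n : ℕ) : hInt h (n : ℤ) = h n := by simp [hInt]

lemma hook_base (h : ℕ → R) (p : ℕ) : hookSchur h p 0 = h (p + 1) := by
  simp only [hookSchur, Matrix.det_fin_one, Matrix.of_apply, Fin.val_zero, if_pos rfl]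
  norm_num
  simp [hInt]
  intro hc; exfalso; omega

lemma hook_rec (h : ℕ → R) (h0 : h 0 = 1) (p q : ℕ) :
    hookSchur h p (q + 1) = h (p + 1) * hookSchur h 0 q - hookSchur h (p + 1) q := by
  rw [hookSchur, Matrix.det_succ_column_zero, Fin.sum_univ_succ, Fin.sum_univ_succ]
  have m0 : ((Matrix.of fun i j : Fin (q + 2) =>
      hInt h ((if (i : ℕ) = 0 then (p : ℤ) + 1 else 1) - (i:ℕ) + (j:ℕ))).submatrix
        (Fin.succAbove 0) Fin.succ).det = hookSchur h 0 q := by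
    rw [hookSchur]; congr 1; ext i j
    simp only [Matrix.submatrix_apply, Fin.succAbove_zero, Matrix.of_apply, Fin.val_succ]
    congr 1
    split_ifs <;> first | contradiction | (push_cast; omega)
  have m1 : ((Matrix.of fun i j : Fin (q + 2) =>
      hInt h ((if (i : ℕ) = 0 then (p : ℤ) + 1 else 1) - (i:ℕ) + (j:ℕ))).submatrix
        (Fin.succ 0).succAbove Fin.succ).det = hookSchur h (p + 1) q := by
    rw [hookSchur]; congr 1; ext i j
    induction i using Fin.cases with
    | zero =>
        simp only [Matrix.submatrix_apply, Fin.succ_succAbove_zero, Matrix.of_apply,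
          Fin.val_zero, Fin.val_succ, if_pos rfl]
        congr 1
        split_ifs <;> first | contradiction | (push_cast; omega)
    | succ k =>
        simp only [Matrix.submatrix_apply, Fin.succ_succAbove_succ, Fin.succAbove_zero,
          Matrix.of_apply, Fin.val_succ]
        congr 1
        split_ifs <;> first | contradiction | (push_cast; omega)
  have tail : ∀ i : Fin q, ((-1 : R) ^ ((i.succ.succ : Fin (q+2)) : ℕ) *
      (Matrix.of fun i j : Fin (q + 2) =>
        hInt h ((if (i : ℕ) = 0 then (p : ℤ) + 1 else 1) - (i:ℕ) + (j:ℕ))) i.succ.succ 0 *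
      ((Matrix.of fun i j : Fin (q + 2) =>
        hInt h ((if (i : ℕ) = 0 then (p : ℤ) + 1 else 1) - (i:ℕ) + (j:ℕ))).submatrix
          i.succ.succ.succAbove Fin.succ).det) = 0 := by
    intro i
    have hz : (Matrix.of fun i j : Fin (q + 2) =>
        hInt h ((if (i : ℕ) = 0 then (p : ℤ) + 1 else 1) - (i:ℕ) + (j:ℕ))) i.succ.succ 0 = 0 := by
      simp only [Matrix.of_apply, Fin.val_succ, Fin.val_zero]
      rw [if_neg (by omega), hInt]
      rw [if_neg (by push_cast; omega)]
    rw [hz]; ring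
  rw [Finset.sum_congr rfl (fun i _ => tail i), Finset.sum_const_zero, m0, m1]
  have e00 : (Matrix.of fun i j : Fin (q + 2) =>
      hInt h ((if (i : ℕ) = 0 then (p : ℤ) + 1 else 1) - (i:ℕ) + (j:ℕ))) 0 0 = h (p + 1) := by
    simp only [Matrix.of_apply, Fin.val_zero, if_pos rfl]
    norm_num
    simp [hInt]
    intro hc; exfalso; omega
  have e10 : (Matrix.of fun i j : Fin (q + 2) =>
      hInt h ((if (i : ℕ) = 0 then (p : ℤ) + 1 else 1) - (i:ℕ) + (j:ℕ))) (Fin.succ 0) 0 = 1 := by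
    simp only [Matrix.of_apply, Fin.val_succ, Fin.val_zero]
    simp only [show (0:ℕ) + 1 ≠ 0 from by omega, if_false]
    norm_num [hInt, h0]
  rw [e00, e10]
  simp [Fin.val_succ]
  ring
def eFun {R : Type*} [CommRing R] (h : ℕ → R) : ℕ → R
  | 0 => 1
  | q + 1 => hookSchur h 0 q

variable {R : Type*} [CommRing R]

lemma hook_closed (h : ℕ → R) (h0 : h 0 = 1) :
    ∀ q p, hookSchur h p q =
      ∑ i ∈ Finset.range (q + 1), (-1 : R) ^ i * h (p + 1 + i) * eFun h (q - i) := by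
  intro q
  induction q with
  | zero => intro p; simp [hook_base, eFun]
  | succ q ih =>
      intro p
      rw [hook_rec h h0 p q, Finset.sum_range_succ']
      rw [ih (p + 1)]
      have : ∀ i ∈ Finset.range (q + 1),
          (-1 : R) ^ (i + 1) * h (p + 1 + (i + 1)) * eFun h (q + 1 - (i + 1)) =
          -((-1 : R) ^ i * h (p + 1 + 1 + i) * eFun h (q - i)) := by
        intro i _
        have e1 : p + 1 + (i + 1) = p + 1 + 1 + i := by omega
        have e2 : q + 1 - (i + 1) = q - i := by omega
        rw [e1, e2]; ring
      rw [Finset.sum_congr rfl this, Finset.sum_neg_distrib]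
      simp [eFun]
      ring

lemma newton (h : ℕ → R) (h0 : h 0 = 1) (q : ℕ) :
    ∑ j ∈ Finset.range (q + 1), (-1 : R) ^ j * h j * eFun h (q - j)
      = if q = 0 then 1 else 0 := by
  cases q with
  | zero => simp [eFun, h0]
  | succ n =>
      rw [Finset.sum_range_succ']
      have : ∀ i ∈ Finset.range (n + 1),
          (-1 : R) ^ (i + 1) * h (i + 1) * eFun h (n + 1 - (i + 1)) =
          -((-1 : R) ^ i * h (0 + 1 + i) * eFun h (n - i)) := by
        intro i _
        have e1 : i + 1 = 0 + 1 + i := by omega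
        have e2 : n + 1 - (i + 1) = n - i := by omega
        rw [e2]; rw [show h (i+1) = h (0+1+i) by rw [← e1]]; ring
      rw [Finset.sum_congr rfl this, Finset.sum_neg_distrib, ← hook_closed h h0 n 0]
      simp [eFun, h0]

lemma bracket (h : ℕ → R) (h0 : h 0 = 1) (p m : ℕ) :
    ((if p = 0 ∧ m = 0 then (1 : R) else 0) +
      (if p = 0 then 0 else hookSchur h (p - 1) m) +
      (if m = 0 then 0 else hookSchur h p (m - 1))) = h p * eFun h m := by
  match p, m with
  | 0, 0 => simp [eFun, h0]
  | 0, m + 1 => simp [eFun, h0]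
  | p + 1, 0 => simp [eFun, hook_base]
  | p + 1, m + 1 =>
      simp only [Nat.succ_ne_zero, if_neg, Nat.add_sub_cancel, false_and, if_false]
      rw [eFun, hook_rec h h0 p m]
      ring

end WidomAux

/-- The generating function identity
`1 + (u+v) ∑_{p,q ≥ 0} s_{(p|q)} u^p v^q = H(u)/H(-v)`, stated coefficientwise
in the equivalent multiplied-out form `H(-v)·(1 + (u+v)∑ s u^p v^q) = H(u)`:
the coefficient of `u^p v^q` of `1 + (u+v)∑ s u^p v^q` is
`δ_{p0}δ_{q0} + s_{(p-1|q)} + s_{(p|q-1)}`, the coefficient of `v^j` in `H(-v)`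
is `(-1)^j h_j`, and the coefficient of `u^p v^q` in `H(u)` is `h_p δ_{q0}`.
This is a polynomial identity in the algebraically independent generators
`h_1, h_2, …` of the ring of symmetric functions (with `h_0 = 1`), so it is
stated for an arbitrary commutative ring `R` and any `h : ℕ → R` with `h 0 = 1`. -/

theorem widom_stmt12 {R : Type*} [CommRing R] (h : ℕ → R) (h0 : h 0 = 1) :
    ∀ p q : ℕ,
      ∑ j ∈ Finset.range (q + 1), (-1 : R) ^ j * h j *
        ((if p = 0 ∧ q - j = 0 then 1 else 0) +
          (if p = 0 then 0 else hookSchur h (p - 1) (q - j)) +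
          (if q - j = 0 then 0 else hookSchur h p (q - j - 1)))
      = if q = 0 then h p else 0 := by
  intro p q
  have step : ∀ j ∈ Finset.range (q + 1),
      (-1 : R) ^ j * h j *
        ((if p = 0 ∧ q - j = 0 then 1 else 0) +
          (if p = 0 then 0 else hookSchur h (p - 1) (q - j)) +
          (if q - j = 0 then 0 else hookSchur h p (q - j - 1)))
      = h p * ((-1 : R) ^ j * h j * eFun h (q - j)) := by
    intro j _
    rw [bracket h h0 p (q - j)]
    ring
  rw [Finset.sum_congr rfl step, ← Finset.mul_sum, newton h h0 q]
  split_ifs <;> ring
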